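/- arXiv:2410.19617 — 2 statements merged into one kernel-verified Lean document; each statement's English description precedes it below -/
import Mathlib

section
/- (Soundness under separable measurements) In the setting of the soundness identity, replace the shared-randomness product POVMs by a single POVM {Ξ_{i_1…i_n}} on ⊗_{j=1}^n (ℂ^{d_j}⊗ℂ^{d_j}) whose every element is separable across the n pairs, i.e., Ξ_{i_1…i_n} = Σ_r ⊗_{j=1}^n M^{(j)}_{r; i_1…i_n} with each M^{(j)}_{r; i_1…i_n} a positive semidefinite matrix on ℂ^{d_j}⊗ℂ^{d_j} (the pair A'_j⊗A_j). If W satisfies tr(W σ) ≥ 0 for every fully separable density matrix σ on ⊗_j ℂ^{d_j}, and ρ is fully separable, then Σ_{i,k} β^{i}_{k} · tr[Ξ_{i_1…i_n} · (ρ on the A parts, ⊗_j ω^{(j)}_{k_j} on the A' parts)] ≥ 0. -/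
open Matrix BigOperators
open scoped ComplexOrder Kronecker

noncomputable section

/-- A density matrix: positive semidefinite with trace one. -/
def IsDensity {ι : Type*} [Fintype ι] (ρ : Matrix ι ι ℂ) : Prop :=
  ρ.PosSemidef ∧ ρ.trace = 1

/-- Kronecker (tensor) product of a finite family of matrices. -/
def famKron {J : Type*} [Fintype J] {ι κ : J → Type*}
    (M : ∀ j, Matrix (ι j) (κ j) ℂ) : Matrix (∀ j, ι j) (∀ j, κ j) ℂ :=
  fun a b => ∏ j, M j (a j) (b j)

/-- The maximally entangled state `Φ₊ = (1/d) Σ_{j,k} |jj⟩⟨kk|` on `ℂ^d ⊗ ℂ^d`. -/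
def maxEnt (d : ℕ) : Matrix (Fin d × Fin d) (Fin d × Fin d) ℂ :=
  fun p q => if p.1 = p.2 ∧ q.1 = q.2 then (d : ℂ)⁻¹ else 0

/-- The generalized Bell projector `(I ⊗ U) Φ₊ (I ⊗ U)†`, acting on the pair
(ancilla A', party A), ancilla first. -/
def bellProj {d : ℕ} (U : Matrix (Fin d) (Fin d) ℂ) :
    Matrix (Fin d × Fin d) (Fin d × Fin d) ℂ :=
  ((1 : Matrix (Fin d) (Fin d) ℂ) ⊗ₖ U) * maxEnt d *
    ((1 : Matrix (Fin d) (Fin d) ℂ) ⊗ₖ U)ᴴ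

/-- The state on `⊗_j (A'_j ⊗ A_j)` obtained by placing `ρ` on the `A` parts (second
components) and `⊗_j ω_j` on the ancilla `A'` parts (first components). -/
def assemble {n : ℕ} {d : Fin n → ℕ}
    (ρ : Matrix (∀ j, Fin (d j)) (∀ j, Fin (d j)) ℂ)
    (ω : ∀ j, Matrix (Fin (d j)) (Fin (d j)) ℂ) :
    Matrix (∀ j, Fin (d j) × Fin (d j)) (∀ j, Fin (d j) × Fin (d j)) ℂ :=
  fun p q => (∏ j, ω j (p j).1 (q j).1) * ρ (fun j => (p j).2) (fun j => (q j).2)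

/-- Partial trace over all the `A` parts (the second components of the pairs). -/
def ptraceA {n : ℕ} {d : Fin n → ℕ}
    (M : Matrix (∀ j, Fin (d j) × Fin (d j)) (∀ j, Fin (d j) × Fin (d j)) ℂ) :
    Matrix (∀ j, Fin (d j)) (∀ j, Fin (d j)) ℂ :=
  fun a' b' => ∑ a : ∀ j, Fin (d j), M (fun j => (a' j, a j)) (fun j => (b' j, a j))

/-- `N_{μ;i}`: the matrix on the ancilla (`A'`) parts obtained by partially tracing out
all `A` parts of `(⊗_j Ξ_{μ,i_j}) · (ρ on A, identity on A')`. -/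
def NEve {n M : ℕ} {d : Fin n → ℕ}
    (Ξ : Fin M → ∀ j, Fin ((d j) ^ 2) →
      Matrix (Fin (d j) × Fin (d j)) (Fin (d j) × Fin (d j)) ℂ)
    (ρ : Matrix (∀ j, Fin (d j)) (∀ j, Fin (d j)) ℂ)
    (μ : Fin M) (i : ∀ j, Fin ((d j) ^ 2)) :
    Matrix (∀ j, Fin (d j)) (∀ j, Fin (d j)) ℂ :=
  ptraceA (famKron (fun j => Ξ μ j (i j)) *
    assemble ρ (fun j => (1 : Matrix (Fin (d j)) (Fin (d j)) ℂ)))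

/-- The effective state
`ς = Σ_μ π(μ) Σ_i (⊗_j U_{i_j}^*) N_{μ;i} (⊗_j U_{i_j}ᵀ)` produced by Eve. -/
def sigmaEve {n M : ℕ} {d : Fin n → ℕ} (π : Fin M → ℝ)
    (Ξ : Fin M → ∀ j, Fin ((d j) ^ 2) →
      Matrix (Fin (d j) × Fin (d j)) (Fin (d j) × Fin (d j)) ℂ)
    (U : ∀ j, Fin ((d j) ^ 2) → Matrix (Fin (d j)) (Fin (d j)) ℂ)
    (ρ : Matrix (∀ j, Fin (d j)) (∀ j, Fin (d j)) ℂ) :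
    Matrix (∀ j, Fin (d j)) (∀ j, Fin (d j)) ℂ :=
  ∑ μ, (π μ : ℂ) • ∑ i : ∀ j, Fin ((d j) ^ 2),
    famKron (fun j => ((U j (i j))ᵀ)ᴴ) * NEve Ξ ρ μ i *
      famKron (fun j => (U j (i j))ᵀ)

/-- Full separability of an `n`-partite state. -/
def FullySeparable {n : ℕ} {d : Fin n → ℕ}
    (ρ : Matrix (∀ j, Fin (d j)) (∀ j, Fin (d j)) ℂ) : Prop :=
  ∃ (M : ℕ) (w : Fin M → ℝ)
    (σ : Fin M → ∀ j, Matrix (Fin (d j)) (Fin (d j)) ℂ),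
    (∀ m, 0 ≤ w m) ∧ (∑ m, w m = 1) ∧
    (∀ m j, IsDensity (σ m j)) ∧
    ρ = ∑ m, (w m : ℂ) • famKron (σ m)


section AuxLemmas

variable {J : Type*} [Fintype J] [DecidableEq J] {ι : J → Type*}
  [∀ j, Fintype (ι j)] [∀ j, DecidableEq (ι j)]

set_option linter.unusedSectionVars false

lemma famKron_mul (A B : ∀ j, Matrix (ι j) (ι j) ℂ) :
    famKron A * famKron B = famKron (fun j => A j * B j) := by
  ext p q
  simp only [Matrix.mul_apply, famKron, ← Finset.prod_mul_distrib]
  exact (Fintype.prod_sum fun j x => A j (p j) x * B j x (q j)).symm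

lemma famKron_trace (A : ∀ j, Matrix (ι j) (ι j) ℂ) :
    (famKron A).trace = ∏ j, (A j).trace := by
  simp only [Matrix.trace, Matrix.diag, famKron]
  exact (Fintype.prod_sum fun j x => A j x x).symm

lemma famKron_smul (c : J → ℂ) (A : ∀ j, Matrix (ι j) (ι j) ℂ) :
    famKron (fun j => c j • A j) = (∏ j, c j) • famKron A := by
  ext p q
  simp [famKron, Finset.prod_mul_distrib, smul_eq_mul]

variable {α : Type*} [Fintype α] [DecidableEq α]

/-- Partial trace (over the second factor) of `M · (1 ⊗ σ)`. -/
def nMat (M : Matrix (α × α) (α × α) ℂ) (σ : Matrix α α ℂ) : Matrix α α ℂ :=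
  fun a' b' => ∑ a, ∑ c, M (a', a) (b', c) * σ c a

lemma trace_mul_kron (M : Matrix (α × α) (α × α) ℂ) (σ ω : Matrix α α ℂ) :
    (M * (ω ⊗ₖ σ)).trace = (nMat M σ * ω).trace := by
  simp only [Matrix.trace, Matrix.diag, Matrix.mul_apply, Matrix.kroneckerMap_apply, nMat,
    Fintype.sum_prod_type, Finset.sum_mul]
  refine Finset.sum_congr rfl fun a' _ => ?_
  rw [Finset.sum_comm]
  exact Finset.sum_congr rfl fun b' _ => Finset.sum_congr rfl fun a _ =>
    Finset.sum_congr rfl fun c _ => by ring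

lemma psd_sum {ι' : Type*} (s : Finset ι') (f : ι' → Matrix α α ℂ)
    (hf : ∀ i ∈ s, (f i).PosSemidef) : (∑ i ∈ s, f i).PosSemidef := by
  classical
  induction s using Finset.induction with
  | empty => simpa using Matrix.PosSemidef.zero
  | insert _ _ h ih =>
      rw [Finset.sum_insert h]
      exact (hf _ (Finset.mem_insert_self _ _)).add
        (ih fun i hi => hf i (Finset.mem_insert_of_mem hi))

lemma nMat_posSemidef {M : Matrix (α × α) (α × α) ℂ} {σ : Matrix α α ℂ}
    (hM : M.PosSemidef) (hσ : σ.PosSemidef) : (nMat M σ).PosSemidef := by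
  obtain ⟨B, hB⟩ := (by open scoped MatrixOrder in
    exact CStarAlgebra.nonneg_iff_eq_star_mul_self.mp hσ.nonneg : ∃ B : Matrix α α ℂ, σ = Bᴴ * B)
  set K : α → Matrix (α × α) α ℂ :=
    fun s => Matrix.of (fun (p : α × α) (a' : α) => if p.1 = a' then star (B s p.2) else 0) with hK
  have hKMK : ∀ s a' b', ((K s)ᴴ * M * (K s)) a' b'
      = ∑ a, ∑ c, B s a * M (a', a) (b', c) * star (B s c) := by
    intro s a' b'
    simp only [Matrix.mul_apply, Matrix.conjTranspose_apply, hK, Matrix.of_apply,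
      apply_ite star, star_star, star_zero, Fintype.sum_prod_type, ite_mul, zero_mul,
      mul_ite, mul_zero, Finset.sum_ite_irrel, Finset.sum_ite_eq, Finset.sum_ite_eq',
      Finset.mem_univ, if_true, Finset.sum_const_zero, Finset.sum_mul, Finset.mul_sum]
    rw [Finset.sum_comm]
  have key : nMat M σ = ∑ s, (K s)ᴴ * M * (K s) := by
    ext a' b'
    rw [Matrix.sum_apply]
    simp only [hKMK, nMat, hB, Matrix.mul_apply, Matrix.conjTranspose_apply]
    conv_rhs => rw [Finset.sum_comm]
    refine Finset.sum_congr rfl fun a _ => ?_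
    conv_rhs => rw [Finset.sum_comm]
    refine Finset.sum_congr rfl fun c _ => ?_
    rw [Finset.mul_sum]
    exact Finset.sum_congr rfl fun s _ => by ring
  rw [key]
  exact psd_sum _ _ fun s _ => hM.conjTranspose_mul_mul_same (K s)

lemma trace_conj {U : Matrix α α ℂ} (hU : Uᴴ * U = 1) (t m : Matrix α α ℂ) :
    (m * tᵀ).trace = ((U * t * Uᴴ) * (U * mᵀ * Uᴴ)).trace := by
  have h1 : (U * t * Uᴴ) * (U * mᵀ * Uᴴ) = U * (t * mᵀ) * Uᴴ := by
    rw [Matrix.mul_assoc (U * t) Uᴴ (U * mᵀ * Uᴴ), Matrix.mul_assoc U mᵀ Uᴴ,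
      ← Matrix.mul_assoc Uᴴ U (mᵀ * Uᴴ), hU, Matrix.one_mul,
      ← Matrix.mul_assoc (U * t) mᵀ Uᴴ, Matrix.mul_assoc U t mᵀ]
  rw [h1, Matrix.trace_mul_cycle, ← Matrix.mul_assoc, hU, Matrix.one_mul,
    ← Matrix.trace_transpose, Matrix.transpose_mul, Matrix.transpose_transpose]

lemma psd_trace_zero {s : Matrix α α ℂ} (hs : s.PosSemidef) (h : s.trace = 0) : s = 0 := by
  obtain ⟨B, rfl⟩ := (by open scoped MatrixOrder in
    exact CStarAlgebra.nonneg_iff_eq_star_mul_self.mp hs.nonneg : ∃ B : Matrix α α ℂ, s = Bᴴ * B)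
  have h2 : ∑ a, ∑ i, Complex.normSq (B i a) = 0 := by
    have h3 : (Bᴴ * B).trace = ((∑ a, ∑ i, Complex.normSq (B i a) : ℝ) : ℂ) := by
      simp [Matrix.trace, Matrix.diag, Matrix.mul_apply, Matrix.conjTranspose_apply,
        Complex.normSq_eq_conj_mul_self]
    rw [h3] at h
    exact_mod_cast h
  have hB0 : B = 0 := by
    ext i a
    have h4 := (Finset.sum_eq_zero_iff_of_nonneg (fun a _ => Finset.sum_nonneg
      (fun i _ => Complex.normSq_nonneg (B i a)))).mp h2 a (Finset.mem_univ a)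
    have h5 := (Finset.sum_eq_zero_iff_of_nonneg
      (fun i _ => Complex.normSq_nonneg (B i a))).mp h4 i (Finset.mem_univ i)
    simpa using Complex.normSq_eq_zero.mp h5
  simp [hB0]

lemma psd_trace_nonneg {s : Matrix α α ℂ} (hs : s.PosSemidef) : 0 ≤ s.trace := by
  refine Finset.sum_nonneg fun a _ => ?_
  have := hs.dotProduct_mulVec_nonneg (Pi.single a 1)
  simpa [dotProduct, mulVec, Pi.single_apply] using this

lemma psd_smul_nonneg {s : Matrix α α ℂ} (hs : s.PosSemidef) {c : ℂ} (hc : 0 ≤ c) :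
    (c • s).PosSemidef := by
  refine Matrix.PosSemidef.of_dotProduct_mulVec_nonneg ?_ ?_
  · have hcs : star c = c := by
      rw [Complex.star_def, Complex.conj_eq_iff_im]
      exact ((Complex.le_def.mp hc).2).symm
    unfold Matrix.IsHermitian
    rw [Matrix.conjTranspose_smul, hcs, hs.1.eq]
  · intro x
    have h : star x ⬝ᵥ (c • s) *ᵥ x = c * (star x ⬝ᵥ s *ᵥ x) := by
      simp [Matrix.smul_mulVec, dotProduct_smul]
    rw [h]
    exact mul_nonneg hc (hs.dotProduct_mulVec_nonneg x)

lemma complex_inv_nonneg {c : ℂ} (h : 0 ≤ c) : 0 ≤ c⁻¹ := by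
  obtain ⟨hre, him⟩ := Complex.le_def.mp h
  have hc : c = ((c.re : ℝ) : ℂ) := by
    apply Complex.ext <;> simp [him.symm]
  rw [hc, ← Complex.ofReal_inv, Complex.le_def]
  refine ⟨?_, by simp⟩
  simpa using inv_nonneg.mpr (show (0:ℝ) ≤ c.re by simpa using hre)

end AuxLemmas

/-- Soundness under separable measurements: with a single POVM `{Ξ_i}` on
`⊗_j (ℂ^{d_j} ⊗ ℂ^{d_j})` whose every element is separable across the `n` pairs,
the MDI value is nonnegative for every fully separable `ρ`, provided `W` is an
entanglement witness. -/
theorem mdi_soundness_separable_measurements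
    {n : ℕ} (d : Fin n → ℕ)
    (U : ∀ j, Fin ((d j) ^ 2) → Matrix (Fin (d j)) (Fin (d j)) ℂ)
    (hU : ∀ j i, (U j i)ᴴ * U j i = 1)
    (horth : ∀ j i i', ((U j i)ᴴ * U j i').trace = if i = i' then (d j : ℂ) else 0)
    (ρ : Matrix (∀ j, Fin (d j)) (∀ j, Fin (d j)) ℂ) (hρ : IsDensity ρ)
    (hρsep : FullySeparable ρ)
    (W : Matrix (∀ j, Fin (d j)) (∀ j, Fin (d j)) ℂ) (hW : W.IsHermitian)
    (hWitness : ∀ σ : Matrix (∀ j, Fin (d j)) (∀ j, Fin (d j)) ℂ,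
      FullySeparable σ → 0 ≤ (W * σ).trace)
    (τ : ∀ j, Fin ((d j) ^ 2) → Matrix (Fin (d j)) (Fin (d j)) ℂ)
    (hτ : ∀ j k, IsDensity (τ j k))
    (β : (∀ j, Fin ((d j) ^ 2)) → (∀ j, Fin ((d j) ^ 2)) → ℝ)
    (hdecomp : ∀ i, W = ∑ k : ∀ j, Fin ((d j) ^ 2),
      (β i k : ℂ) • famKron (fun j => U j (i j) * τ j (k j) * (U j (i j))ᴴ))
    (Ξ : (∀ j, Fin ((d j) ^ 2)) →
      Matrix (∀ j, Fin (d j) × Fin (d j)) (∀ j, Fin (d j) × Fin (d j)) ℂ)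
    (R : (∀ j, Fin ((d j) ^ 2)) → ℕ)
    (Mel : ∀ i, Fin (R i) → ∀ j,
      Matrix (Fin (d j) × Fin (d j)) (Fin (d j) × Fin (d j)) ℂ)
    (hMel : ∀ i r j, (Mel i r j).PosSemidef)
    (hΞ : ∀ i, Ξ i = ∑ r, famKron (fun j => Mel i r j))
    (hΞsum : ∑ i, Ξ i = 1) :
    0 ≤ ∑ i : ∀ j, Fin ((d j) ^ 2), ∑ k : ∀ j, Fin ((d j) ^ 2),
      (β i k : ℂ) *
        (Ξ i * assemble ρ (fun j => (τ j (k j))ᵀ)).trace := by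
  classical
  obtain ⟨Nm, w, σs, hw0, -, hσd, hρeq⟩ := hρsep
  -- the per-site effective states handed to the witness
  set sM : ∀ (i : ∀ j, Fin ((d j) ^ 2)), Fin (R i) → Fin Nm → ∀ j : Fin n,
      Matrix (Fin (d j)) (Fin (d j)) ℂ :=
    fun i r m j => U j (i j) * (nMat (Mel i r j) (σs m j))ᵀ * (U j (i j))ᴴ with hsM
  have hsMpsd : ∀ i r m j, (sM i r m j).PosSemidef := fun i r m j =>
    ((nMat_posSemidef (hMel i r j) (hσd m j).1).transpose).mul_mul_conjTranspose_same _
  -- positivity of the witness value on product PSD families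
  have hpos : ∀ (s : ∀ j, Matrix (Fin (d j)) (Fin (d j)) ℂ),
      (∀ j, (s j).PosSemidef) → 0 ≤ (W * famKron s).trace := by
    intro s hs
    by_cases hz : ∃ j, (s j).trace = 0
    · obtain ⟨j0, hj0⟩ := hz
      have h0 : s j0 = 0 := psd_trace_zero (hs j0) hj0
      have hfk : famKron s = 0 := by
        ext p q
        exact Finset.prod_eq_zero (Finset.mem_univ j0) (by simp [h0])
      simp [hfk]
    · push_neg at hz
      set c : Fin n → ℂ := fun j => (s j).trace with hc
      have hc0 : ∀ j, 0 ≤ c j := fun j => psd_trace_nonneg (hs j)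
      set σh : ∀ j, Matrix (Fin (d j)) (Fin (d j)) ℂ := fun j => (c j)⁻¹ • s j with hσh
      have hdens : ∀ j, IsDensity (σh j) := by
        intro j
        refine ⟨psd_smul_nonneg (hs j) (complex_inv_nonneg (hc0 j)), ?_⟩
        rw [hσh]
        simp only [Matrix.trace_smul, smul_eq_mul]
        exact inv_mul_cancel₀ (hz j)
      have hsep : FullySeparable (famKron σh) := by
        refine ⟨1, fun _ => 1, fun _ => σh, fun _ => zero_le_one, by simp,
          fun _ j => hdens j, by simp⟩
      have hkey : famKron s = (∏ j, c j) • famKron σh := by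
        rw [← famKron_smul]
        refine congrArg famKron (funext fun j => ?_).symm
        rw [hσh]
        simp only [smul_smul]
        rw [mul_inv_cancel₀ (hz j), one_smul]
      rw [hkey, Matrix.mul_smul, Matrix.trace_smul, smul_eq_mul]
      exact mul_nonneg (Finset.prod_nonneg fun j _ => hc0 j) (hWitness _ hsep)
  -- step 1 : expand the trace
  have h1 : ∀ (i k : ∀ j, Fin ((d j) ^ 2)), (Ξ i * assemble ρ (fun j => (τ j (k j))ᵀ)).trace
      = ∑ r, ∑ m, (w m : ℂ) *
          ∏ j, ((U j (i j) * τ j (k j) * (U j (i j))ᴴ) * sM i r m j).trace := by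
    intro i k
    have ha : assemble ρ (fun j => (τ j (k j))ᵀ)
        = ∑ m, (w m : ℂ) • famKron (fun j => ((τ j (k j))ᵀ) ⊗ₖ σs m j) := by
      rw [hρeq]
      ext p q
      simp only [assemble, Matrix.sum_apply, Matrix.smul_apply, famKron, smul_eq_mul,
        Matrix.kroneckerMap_apply, Finset.prod_mul_distrib, Finset.mul_sum]
      exact Finset.sum_congr rfl fun m _ => by ring
    rw [ha, hΞ i]
    simp only [Matrix.sum_mul, Matrix.mul_sum, Matrix.mul_smul, Matrix.trace_sum,
      Matrix.trace_smul, smul_eq_mul, famKron_mul, famKron_trace]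
    simp only [Finset.mul_sum]
    rw [Finset.sum_comm]
    refine Finset.sum_congr rfl fun r _ => Finset.sum_congr rfl fun m _ => ?_
    congr 1
    refine Finset.prod_congr rfl fun j _ => ?_
    rw [trace_mul_kron, trace_conj (hU j (i j))]
  -- step 2 : resum against the witness decomposition
  have h2 : ∀ i (r : Fin (R i)) (m : Fin Nm),
      ∑ k : ∀ j, Fin ((d j) ^ 2), (β i k : ℂ) *
          ∏ j, ((U j (i j) * τ j (k j) * (U j (i j))ᴴ) * sM i r m j).trace
        = (W * famKron (sM i r m)).trace := by
    intro i r m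
    conv_rhs => rw [hdecomp i]
    rw [Matrix.sum_mul, Matrix.trace_sum]
    refine Finset.sum_congr rfl fun k _ => ?_
    rw [Matrix.smul_mul, Matrix.trace_smul, smul_eq_mul]
    congr 1
    rw [famKron_mul, famKron_trace]
  -- combine
  have h3 : ∑ i : ∀ j, Fin ((d j) ^ 2), ∑ k : ∀ j, Fin ((d j) ^ 2),
      (β i k : ℂ) * (Ξ i * assemble ρ (fun j => (τ j (k j))ᵀ)).trace
      = ∑ i : ∀ j, Fin ((d j) ^ 2), ∑ r, ∑ m, (w m : ℂ) *
          (W * famKron (sM i r m)).trace := by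
    refine Finset.sum_congr rfl fun i _ => ?_
    have step1 : ∑ k : ∀ j, Fin ((d j) ^ 2),
        (β i k : ℂ) * (Ξ i * assemble ρ (fun j => (τ j (k j))ᵀ)).trace
        = ∑ k : ∀ j, Fin ((d j) ^ 2), ∑ r, ∑ m, (w m : ℂ) * ((β i k : ℂ) *
            ∏ j, ((U j (i j) * τ j (k j) * (U j (i j))ᴴ) * sM i r m j).trace) := by
      refine Finset.sum_congr rfl fun k _ => ?_
      rw [h1 i k, Finset.mul_sum]
      refine Finset.sum_congr rfl fun r _ => ?_
      rw [Finset.mul_sum]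
      exact Finset.sum_congr rfl fun m _ => by ring
    rw [step1, Finset.sum_comm]
    refine Finset.sum_congr rfl fun r _ => ?_
    rw [Finset.sum_comm]
    refine Finset.sum_congr rfl fun m _ => ?_
    rw [← Finset.mul_sum, h2 i r m]
  rw [h3]
  refine Finset.sum_nonneg fun i _ => Finset.sum_nonneg fun r _ =>
    Finset.sum_nonneg fun m _ => ?_
  refine mul_nonneg ?_ (hpos (sM i r m) fun j => hsMpsd i r m j)
  exact_mod_cast hw0 m
end
end

section
/- (POVM lower bound for monotones) Fix n ≥ 1 and local dimensions d_1,…,d_n. Suppose given, for every n-tuple of local dimensions (m_1,…,m_n), a function E from positive semidefinite matrices on ⊗_{j=1}^n ℂ^{m_j} to nonnegative reals, satisfying: (i) homogeneity: E(cX) = c·E(X) for all c ≥ 0; (ii) transposition invariance: E(X^T) = E(X); (iii) monotonicity under selective local operations: for every finite family, indexed by r, of n-tuples of completely positive maps Λ_r^{(j)} (each given by Kraus operators, from ℂ^{m_j} to ℂ^{m'_j}) such that Σ_r ⊗_{j=1}^n Λ_r^{(j)} is trace preserving, one has E(X) ≥ Σ_r E((⊗_{j=1}^n Λ_r^{(j)})(X)).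 Let ρ be a density matrix on ⊗_{j=1}^n ℂ^{d_j} (parties A_j), and for each j let {Π^{(j)}_i}_{i∈X_j} be a POVM on ℂ^{d_j}⊗ℂ^{d_j} (the pair A_j⊗A'_j) with finite outcome set X_j. Define, for each outcome tuple (i_1,…,i_n), the unnormalized state ρ̃_{i_1…i_n} on ⊗_{j=1}^n ℂ^{d_j} (the A' parts) as the partial trace over all A parts of (⊗_j Π^{(j)}_{i_j}) · (ρ placed on the A parts and identity on the A' parts). Then E(ρ) ≥ (1/Π_{j=1}^n d_j) · Σ_{i_1∈X_1,…,i_n∈X_n} E(ρ̃_{i_1…i_n}). -/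
open Matrix BigOperators
open scoped ComplexOrder Kronecker

noncomputable section

/-- Action of a tensor product of local completely positive maps, each given by
Kraus operators `K j : Fin (c j) → Matrix (Fin (m' j)) (Fin (m j)) ℂ`. -/
def mapApply {n : ℕ} {m m' : Fin n → ℕ} {c : Fin n → ℕ}
    (K : ∀ j, Fin (c j) → Matrix (Fin (m' j)) (Fin (m j)) ℂ)
    (X : Matrix (∀ j, Fin (m j)) (∀ j, Fin (m j)) ℂ) :
    Matrix (∀ j, Fin (m' j)) (∀ j, Fin (m' j)) ℂ :=
  ∑ l : ∀ j, Fin (c j),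
    famKron (fun j => K j (l j)) * X * (famKron (fun j => K j (l j)))ᴴ

/-- The state with `ρ` on the `A` parts (first components of the pairs `A_j ⊗ A'_j`)
and the identity on the `A'` parts (second components). -/
def assembleA {n : ℕ} {d : Fin n → ℕ}
    (ρ : Matrix (∀ j, Fin (d j)) (∀ j, Fin (d j)) ℂ) :
    Matrix (∀ j, Fin (d j) × Fin (d j)) (∀ j, Fin (d j) × Fin (d j)) ℂ :=
  fun p q => ρ (fun j => (p j).1) (fun j => (q j).1) *
    ∏ j, (1 : Matrix (Fin (d j)) (Fin (d j)) ℂ) (p j).2 (q j).2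

/-- Partial trace over all the `A` parts (the first components of the pairs). -/
def ptraceFirstParts {n : ℕ} {d : Fin n → ℕ}
    (M : Matrix (∀ j, Fin (d j) × Fin (d j)) (∀ j, Fin (d j) × Fin (d j)) ℂ) :
    Matrix (∀ j, Fin (d j)) (∀ j, Fin (d j)) ℂ :=
  fun a' b' => ∑ a : ∀ j, Fin (d j), M (fun j => (a j, a' j)) (fun j => (a j, b' j))

lemma mapApply_apply {n : ℕ} {m m' c : Fin n → ℕ}
    (K : ∀ j, Fin (c j) → Matrix (Fin (m' j)) (Fin (m j)) ℂ)
    (X : Matrix (∀ j, Fin (m j)) (∀ j, Fin (m j)) ℂ)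
    (a' b' : ∀ j, Fin (m' j)) :
    mapApply K X a' b' =
      ∑ a : ∀ j, Fin (m j), ∑ b : ∀ j, Fin (m j),
        X a b * ∏ j, ∑ k, K j k (a' j) (a j) * star (K j k (b' j) (b j)) := by
  have hrhs : ∀ a b : ∀ j, Fin (m j),
      (∏ j, ∑ k, K j k (a' j) (a j) * star (K j k (b' j) (b j)))
        = ∑ l : ∀ j, Fin (c j), ∏ j, (K j (l j) (a' j) (a j) * star (K j (l j) (b' j) (b j))) := by
    intro a b
    rw [Finset.prod_univ_sum, Fintype.piFinset_univ]
  simp only [hrhs]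
  have hswap : (∑ a : ∀ j, Fin (m j), ∑ b : ∀ j, Fin (m j),
        X a b * ∑ l : ∀ j, Fin (c j), ∏ j, (K j (l j) (a' j) (a j) * star (K j (l j) (b' j) (b j))))
      = ∑ b : ∀ j, Fin (m j), ∑ a : ∀ j, Fin (m j),
        X a b * ∑ l : ∀ j, Fin (c j), ∏ j, (K j (l j) (a' j) (a j) * star (K j (l j) (b' j) (b j))) :=
    Finset.sum_comm
  rw [hswap]
  unfold mapApply
  simp only [Matrix.sum_apply, Matrix.mul_apply, Matrix.conjTranspose_apply]
  simp only [famKron]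
  rw [Finset.sum_comm]
  refine Finset.sum_congr rfl fun b _ => ?_
  simp only [Finset.sum_mul]
  rw [Finset.sum_comm]
  refine Finset.sum_congr rfl fun a _ => ?_
  rw [Finset.mul_sum]
  refine Finset.sum_congr rfl fun l _ => ?_
  rw [Finset.prod_mul_distrib, star_prod]
  ring
/-- Equivalence between pairs of functions and functions to pairs. -/
def pairEquiv {n : ℕ} (d : Fin n → ℕ) :
    ((∀ j, Fin (d j)) × (∀ j, Fin (d j))) ≃ (∀ j, Fin (d j) × Fin (d j)) where
  toFun p := fun j => (p.1 j, p.2 j)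
  invFun q := (fun j => (q j).1, fun j => (q j).2)
  left_inv p := rfl
  right_inv q := by funext j; rfl

lemma ptrace_formula {n : ℕ} {d : Fin n → ℕ}
    (P : ∀ j, Matrix (Fin (d j) × Fin (d j)) (Fin (d j) × Fin (d j)) ℂ)
    (ρ : Matrix (∀ j, Fin (d j)) (∀ j, Fin (d j)) ℂ)
    (a' b' : ∀ j, Fin (d j)) :
    ptraceFirstParts (famKron P * assembleA ρ) a' b' =
      ∑ a : ∀ j, Fin (d j), ∑ b : ∀ j, Fin (d j),
        ρ b a * ∏ j, P j (a j, a' j) (b j, b' j) := by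
  unfold ptraceFirstParts
  simp only [Matrix.mul_apply]
  simp only [famKron, assembleA]
  refine Finset.sum_congr rfl fun a _ => ?_
  rw [← Equiv.sum_comp (pairEquiv d)]
  rw [Fintype.sum_prod_type]
  -- sum over (b, c) pairs
  have key : ∀ b c : ∀ j, Fin (d j),
      (∏ j, P j (a j, a' j) (pairEquiv d (b, c) j)) *
        (ρ (fun j => ((pairEquiv d (b, c)) j).1) (fun j => a j) *
          ∏ j, (1 : Matrix (Fin (d j)) (Fin (d j)) ℂ) ((pairEquiv d (b, c)) j).2 (b' j))
      = (if c = b' then 1 else 0) * (ρ b a * ∏ j, P j (a j, a' j) (b j, c j)) := by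
    intro b c
    show (∏ j, P j (a j, a' j) (b j, c j)) * (ρ b a * ∏ j, (1 : Matrix (Fin (d j)) (Fin (d j)) ℂ) (c j) (b' j)) = _
    have h1 : (∏ j, (1 : Matrix (Fin (d j)) (Fin (d j)) ℂ) (c j) (b' j)) = if c = b' then 1 else 0 := by
      simp only [Matrix.one_apply]
      rw [Finset.prod_boole]
      simp [funext_iff]
    rw [h1]; ring
  simp only [key]
  rw [Finset.sum_comm]
  simp [Finset.sum_ite_eq']
open scoped MatrixOrder in
/-- Square root of a positive semidefinite matrix. -/
def Matrix.PosSemidef.sqrt {m : Type*} [Fintype m] [DecidableEq m] {A : Matrix m m ℂ}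
    (_ : A.PosSemidef) : Matrix m m ℂ := CFC.sqrt A

open scoped MatrixOrder in
lemma Matrix.PosSemidef.posSemidef_sqrt {m : Type*} [Fintype m] [DecidableEq m]
    {A : Matrix m m ℂ} (hA : A.PosSemidef) : hA.sqrt.PosSemidef :=
  (CFC.sqrt_nonneg A).posSemidef

open scoped MatrixOrder in
lemma Matrix.PosSemidef.sqrt_mul_self {m : Type*} [Fintype m] [DecidableEq m]
    {A : Matrix m m ℂ} (hA : A.PosSemidef) : hA.sqrt * hA.sqrt = A :=
  CFC.sqrt_mul_sqrt_self A hA.nonneg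

lemma kraus_factor {D : ℕ} {P : Matrix (Fin D × Fin D) (Fin D × Fin D) ℂ} (hP : P.PosSemidef)
    (a b a' b' : Fin D) :
    (∑ k : Fin (D * D),
      (((Real.sqrt D)⁻¹ : ℝ) : ℂ) * hP.sqrt (a, a') (finProdFinEquiv.symm k) *
        star ((((Real.sqrt D)⁻¹ : ℝ) : ℂ) * hP.sqrt (b, b') (finProdFinEquiv.symm k)))
      = (((D : ℝ)⁻¹ : ℝ) : ℂ) * P (a, a') (b, b') := by
  have hs : ((((Real.sqrt D)⁻¹ : ℝ)) : ℂ) * ((((Real.sqrt D)⁻¹ : ℝ)) : ℂ)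
      = (((D : ℝ)⁻¹ : ℝ) : ℂ) := by
    rw [← Complex.ofReal_mul, ← mul_inv, Real.mul_self_sqrt (Nat.cast_nonneg D)]
  have hterm : ∀ q : Fin D × Fin D,
      (((Real.sqrt D)⁻¹ : ℝ) : ℂ) * hP.sqrt (a, a') q *
          star ((((Real.sqrt D)⁻¹ : ℝ) : ℂ) * hP.sqrt (b, b') q)
        = (((D : ℝ)⁻¹ : ℝ) : ℂ) * (hP.sqrt (a, a') q * hP.sqrt q (b, b')) := by
    intro q
    rw [star_mul', hP.posSemidef_sqrt.1.apply q (b, b'), Complex.star_def, Complex.conj_ofReal, ← hs]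
    ring
  simp only [hterm]
  rw [← Finset.mul_sum]
  congr 1
  rw [Equiv.sum_comp finProdFinEquiv.symm
    (fun q => hP.sqrt (a, a') q * hP.sqrt q (b, b'))]
  rw [← Matrix.mul_apply, hP.sqrt_mul_self]
/-- Kraus operators of the map `X ↦ (1/D) Tr_A [P (X ⊗ I)]` built from `√P`. -/
def krausOf {D : ℕ} {P : Matrix (Fin D × Fin D) (Fin D × Fin D) ℂ} (hP : P.PosSemidef) :
    Fin (D * D) → Matrix (Fin D) (Fin D) ℂ :=
  fun k a' a => (((Real.sqrt D)⁻¹ : ℝ) : ℂ) * hP.sqrt (a, a') (finProdFinEquiv.symm k)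

lemma mapApply_kraus {n : ℕ} {d : Fin n → ℕ} {x : Fin n → Type} [∀ j, Fintype (x j)]
    (Po : ∀ j, x j → Matrix (Fin (d j) × Fin (d j)) (Fin (d j) × Fin (d j)) ℂ)
    (hpos : ∀ j i, (Po j i).PosSemidef) (i : ∀ j, x j)
    (X : Matrix (∀ j, Fin (d j)) (∀ j, Fin (d j)) ℂ) (a' b' : ∀ j, Fin (d j)) :
    mapApply (m := d) (m' := d) (c := fun j => d j * d j)
        (fun j => krausOf (hpos j (i j))) X a' b'
      = ∑ a : ∀ j, Fin (d j), ∑ b : ∀ j, Fin (d j),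
          X a b * ((∏ j, (((d j : ℝ)⁻¹ : ℝ) : ℂ)) *
            ∏ j, Po j (i j) (a j, a' j) (b j, b' j)) := by
  rw [mapApply_apply]
  refine Finset.sum_congr rfl fun a _ => Finset.sum_congr rfl fun b _ => ?_
  congr 1
  rw [← Finset.prod_mul_distrib]
  refine Finset.prod_congr rfl fun j _ => ?_
  exact kraus_factor (hpos j (i j)) (a j) (b j) (a' j) (b' j)

lemma mapApply_eq_smul_ptrace {n : ℕ} {d : Fin n → ℕ} {x : Fin n → Type} [∀ j, Fintype (x j)]
    (Po : ∀ j, x j → Matrix (Fin (d j) × Fin (d j)) (Fin (d j) × Fin (d j)) ℂ)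
    (hpos : ∀ j i, (Po j i).PosSemidef) (i : ∀ j, x j)
    (ρ : Matrix (∀ j, Fin (d j)) (∀ j, Fin (d j)) ℂ) :
    mapApply (m := d) (m' := d) (c := fun j => d j * d j)
        (fun j => krausOf (hpos j (i j))) ρᵀ
      = ((((∏ j, (d j : ℝ))⁻¹ : ℝ)) : ℂ) •
          ptraceFirstParts (famKron (fun j => Po j (i j)) * assembleA ρ) := by
  have hC : (∏ j, (((d j : ℝ)⁻¹ : ℝ) : ℂ)) = ((((∏ j, (d j : ℝ))⁻¹ : ℝ)) : ℂ) := by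
    rw [← Complex.ofReal_prod, ← Finset.prod_inv_distrib]
  ext a' b'
  rw [Matrix.smul_apply, mapApply_kraus Po hpos, ptrace_formula, smul_eq_mul,
    Finset.mul_sum]
  refine Finset.sum_congr rfl fun a _ => ?_
  rw [Finset.mul_sum]
  refine Finset.sum_congr rfl fun b _ => ?_
  rw [Matrix.transpose_apply, hC]
  ring

lemma trace_sum_mapApply {n : ℕ} {d : Fin n → ℕ} {x : Fin n → Type} [∀ j, Fintype (x j)]
    (Po : ∀ j, x j → Matrix (Fin (d j) × Fin (d j)) (Fin (d j) × Fin (d j)) ℂ)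
    (hpos : ∀ j i, (Po j i).PosSemidef)
    (hsum : ∀ j, ∑ i, Po j i = 1) (hd : ∀ j, 0 < d j)
    (X : Matrix (∀ j, Fin (d j)) (∀ j, Fin (d j)) ℂ) :
    ∑ i : ∀ j, x j,
        (mapApply (m := d) (m' := d) (c := fun j => d j * d j)
          (fun j => krausOf (hpos j (i j))) X).trace = X.trace := by
  have h1 : ∀ (a' a b : ∀ j, Fin (d j)),
      (∑ i : ∀ j, x j, ∏ j, Po j (i j) (a j, a' j) (b j, a' j))
        = if a = b then 1 else 0 := by
    intro a' a b
    rw [← Fintype.piFinset_univ,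
      ← Finset.prod_univ_sum (fun _ => Finset.univ)
        (fun j y => Po j y (a j, a' j) (b j, a' j))]
    have h2 : ∀ j, (∑ ij : x j, Po j ij (a j, a' j) (b j, a' j))
        = (1 : Matrix (Fin (d j) × Fin (d j)) (Fin (d j) × Fin (d j)) ℂ)
            (a j, a' j) (b j, a' j) := by
      intro j
      rw [← hsum j, Matrix.sum_apply]
    simp only [h2, Matrix.one_apply, Prod.mk.injEq, and_true]
    rw [Finset.prod_boole]
    simp [funext_iff]
  set C : ℂ := (∏ j, (((d j : ℝ)⁻¹ : ℝ) : ℂ)) with hCdef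
  simp only [Matrix.trace, Matrix.diag]
  calc (∑ i : ∀ j, x j, ∑ a' : ∀ j, Fin (d j),
        mapApply (m := d) (m' := d) (c := fun j => d j * d j)
          (fun j => krausOf (hpos j (i j))) X a' a')
      = ∑ a' : ∀ j, Fin (d j), ∑ a : ∀ j, Fin (d j), ∑ b : ∀ j, Fin (d j),
          X a b * (C * if a = b then 1 else 0) := by
        simp only [mapApply_kraus Po hpos]
        rw [Finset.sum_comm]
        refine Finset.sum_congr rfl fun a' _ => ?_
        rw [Finset.sum_comm]
        refine Finset.sum_congr rfl fun a _ => ?_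
        rw [Finset.sum_comm]
        refine Finset.sum_congr rfl fun b _ => ?_
        simp only [← Finset.mul_sum]
        rw [h1]
    _ = ∑ a : ∀ j, Fin (d j), X a a := by
        simp only [mul_ite, mul_one, mul_zero, Finset.sum_ite_eq, Finset.mem_univ,
          if_true]
        rw [Finset.sum_const]
        have hone : ((Fintype.card (∀ j, Fin (d j)) : ℂ)) * C = 1 := by
          have hcard : (Fintype.card (∀ j, Fin (d j)) : ℂ) = ∏ j, (d j : ℂ) := by
            simp [Fintype.card_pi]
          rw [hcard, hCdef, ← Finset.prod_mul_distrib]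
          refine Finset.prod_eq_one fun j _ => ?_
          have hdj : ((d j : ℂ)) ≠ 0 := Nat.cast_ne_zero.mpr (hd j).ne'
          push_cast
          field_simp
        rw [nsmul_eq_mul]
        calc ((Fintype.card (∀ j, Fin (d j)) : ℂ)) * (∑ a : ∀ j, Fin (d j), X a a * C)
            = (∑ a : ∀ j, Fin (d j), X a a) * (((Fintype.card (∀ j, Fin (d j)) : ℂ)) * C) := by
              rw [Finset.sum_mul]; ring_nf
              rw [Finset.mul_sum]
              refine Finset.sum_congr rfl fun a _ => by ring
          _ = ∑ a : ∀ j, Fin (d j), X a a := by rw [hone, mul_one]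
lemma posSemidef_sum {ι m : Type*} [Fintype ι] [Fintype m] [DecidableEq m]
    (f : ι → Matrix m m ℂ) (h : ∀ i, (f i).PosSemidef) : (∑ i, f i).PosSemidef :=
  Finset.sum_induction f _ (fun _ _ ha hb => ha.add hb) Matrix.PosSemidef.zero
    (fun i _ => h i)

lemma posSemidef_mapApply {n : ℕ} {m m' c : Fin n → ℕ}
    (K : ∀ j, Fin (c j) → Matrix (Fin (m' j)) (Fin (m j)) ℂ)
    {X : Matrix (∀ j, Fin (m j)) (∀ j, Fin (m j)) ℂ} (hX : X.PosSemidef) :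
    (mapApply K X).PosSemidef :=
  posSemidef_sum _ fun _ => hX.mul_mul_conjTranspose_same _

lemma posSemidef_real_smul {m : Type*} [Fintype m]
    {X : Matrix m m ℂ} (hX : X.PosSemidef) {r : ℝ} (hr : 0 ≤ r) :
    (((r : ℝ) : ℂ) • X).PosSemidef := by
  constructor
  · unfold Matrix.IsHermitian
    rw [Matrix.conjTranspose_smul, hX.1.eq, Complex.star_def, Complex.conj_ofReal]
  · intro v
    have h := (hX.smul hr).2 v
    simpa only [Complex.coe_smul] using h
set_option maxHeartbeats 1000000 in
/-- POVM lower bound for resource monotones: for any nonnegative, homogeneous,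
transposition-invariant functional `E` that is monotone under selective local
operations, and any local POVMs `{Π^{(j)}_i}` on the pairs `A_j ⊗ A'_j`,
`E(ρ) ≥ (1/Π_j d_j) Σ_i E(ρ̃_i)`. -/
theorem povm_lower_bound
    {n : ℕ} (hn : 1 ≤ n) (d : Fin n → ℕ)
    (E : ∀ m : Fin n → ℕ, Matrix (∀ j, Fin (m j)) (∀ j, Fin (m j)) ℂ → ℝ)
    (hnonneg : ∀ (m : Fin n → ℕ) (X : Matrix (∀ j, Fin (m j)) (∀ j, Fin (m j)) ℂ),
      X.PosSemidef → 0 ≤ E m X)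
    (hhom : ∀ (m : Fin n → ℕ) (X : Matrix (∀ j, Fin (m j)) (∀ j, Fin (m j)) ℂ),
      X.PosSemidef → ∀ c : ℝ, 0 ≤ c → E m ((c : ℂ) • X) = c * E m X)
    (htrans : ∀ (m : Fin n → ℕ) (X : Matrix (∀ j, Fin (m j)) (∀ j, Fin (m j)) ℂ),
      X.PosSemidef → E m Xᵀ = E m X)
    (hmono : ∀ (m m' : Fin n → ℕ) (R : ℕ) (c : Fin R → Fin n → ℕ)
      (K : ∀ r, ∀ j, Fin (c r j) → Matrix (Fin (m' j)) (Fin (m j)) ℂ),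
      (∀ X : Matrix (∀ j, Fin (m j)) (∀ j, Fin (m j)) ℂ,
        (∑ r, mapApply (K r) X).trace = X.trace) →
      ∀ X : Matrix (∀ j, Fin (m j)) (∀ j, Fin (m j)) ℂ, X.PosSemidef →
        ∑ r, E m' (mapApply (K r) X) ≤ E m X)
    (ρ : Matrix (∀ j, Fin (d j)) (∀ j, Fin (d j)) ℂ) (hρ : IsDensity ρ)
    (x : Fin n → Type) [∀ j, Fintype (x j)]
    (Po : ∀ j, x j → Matrix (Fin (d j) × Fin (d j)) (Fin (d j) × Fin (d j)) ℂ)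
    (hpos : ∀ j i, (Po j i).PosSemidef)
    (hsum : ∀ j, ∑ i, Po j i = 1) :
    (∏ j, (d j : ℝ))⁻¹ * ∑ i : ∀ j, x j,
        E d (ptraceFirstParts (famKron (fun j => Po j (i j)) * assembleA ρ))
      ≤ E d ρ := by
  classical
  have hne : Nonempty (∀ j, Fin (d j)) := by
    by_contra h
    rw [not_nonempty_iff] at h
    have h0 : ρ.trace = 0 := by
      unfold Matrix.trace
      rw [Finset.univ_eq_empty, Finset.sum_empty]
    have h1 := hρ.2
    rw [h0] at h1
    exact zero_ne_one h1
  have hd : ∀ j, 0 < d j := by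
    intro j
    rcases hne with ⟨f⟩
    exact (f j).pos
  have hDpos : 0 < ∏ j, (d j : ℝ) :=
    Finset.prod_pos fun j _ => by exact_mod_cast hd j
  set R := Fintype.card (∀ j, x j) with hR
  let e : Fin R ≃ ∀ j, x j := (Fintype.equivFin (∀ j, x j)).symm
  let K : ∀ r : Fin R, ∀ j, Fin ((fun (_ : Fin R) (j : Fin n) => d j * d j) r j) →
      Matrix (Fin (d j)) (Fin (d j)) ℂ :=
    fun r j => krausOf (hpos j (e r j))
  have htp : ∀ X : Matrix (∀ j, Fin (d j)) (∀ j, Fin (d j)) ℂ,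
      (∑ r, mapApply (K r) X).trace = X.trace := by
    intro X
    rw [Matrix.trace_sum]
    calc ∑ r, (mapApply (K r) X).trace
        = ∑ i : ∀ j, x j, (mapApply (m := d) (m' := d) (c := fun j => d j * d j)
            (fun j => krausOf (hpos j (i j))) X).trace :=
          Equiv.sum_comp e (fun i : ∀ j, x j =>
            (mapApply (m := d) (m' := d) (c := fun j => d j * d j)
              (fun j => krausOf (hpos j (i j))) X).trace)
      _ = X.trace := trace_sum_mapApply Po hpos hsum hd X
  have key := hmono d d R (fun _ j => d j * d j) K htp ρᵀ hρ.1.transpose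
  rw [htrans d ρ hρ.1] at key
  have heach : ∀ i : ∀ j, x j,
      E d (mapApply (m := d) (m' := d) (c := fun j => d j * d j)
          (fun j => krausOf (hpos j (i j))) ρᵀ)
        = (∏ j, (d j : ℝ))⁻¹ *
            E d (ptraceFirstParts (famKron (fun j => Po j (i j)) * assembleA ρ)) := by
    intro i
    have hMps : (mapApply (m := d) (m' := d) (c := fun j => d j * d j)
        (fun j => krausOf (hpos j (i j))) ρᵀ).PosSemidef :=
      posSemidef_mapApply _ hρ.1.transpose
    have hT : (ptraceFirstParts (famKron (fun j => Po j (i j)) * assembleA ρ)).PosSemidef := by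
      have h2 := posSemidef_real_smul hMps (r := ∏ j, (d j : ℝ)) hDpos.le
      rw [mapApply_eq_smul_ptrace Po hpos i ρ, smul_smul, ← Complex.ofReal_mul,
        mul_inv_cancel₀ hDpos.ne', Complex.ofReal_one, one_smul] at h2
      exact h2
    rw [mapApply_eq_smul_ptrace Po hpos i ρ]
    exact hhom d _ hT _ (inv_nonneg.mpr hDpos.le)
  calc (∏ j, (d j : ℝ))⁻¹ * ∑ i : ∀ j, x j,
        E d (ptraceFirstParts (famKron (fun j => Po j (i j)) * assembleA ρ))
      = ∑ i : ∀ j, x j, (∏ j, (d j : ℝ))⁻¹ *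
          E d (ptraceFirstParts (famKron (fun j => Po j (i j)) * assembleA ρ)) :=
        Finset.mul_sum _ _ _
    _ = ∑ i : ∀ j, x j, E d (mapApply (m := d) (m' := d) (c := fun j => d j * d j)
          (fun j => krausOf (hpos j (i j))) ρᵀ) :=
        Finset.sum_congr rfl fun i _ => (heach i).symm
    _ = ∑ r : Fin R, E d (mapApply (K r) ρᵀ) :=
        (Equiv.sum_comp e (fun i : ∀ j, x j =>
          E d (mapApply (m := d) (m' := d) (c := fun j => d j * d j)
            (fun j => krausOf (hpos j (i j))) ρᵀ))).symm
    _ ≤ E d ρ := key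
end
end
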